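/- Let Γ and Λ be Hausdorff topological groups, let A be a dense subgroup of Γ, and let U be an open subgroup of Γ. Let α : A → Λ be a group homomorphism (not assumed continuous) and let β : U → Λ be a continuous group homomorphism, and assume that α and β agree on A ∩ U. Then there is a unique continuous group homomorphism γ : Γ → Λ whose restriction to A is α and whose restriction to U is β. -/

import Mathlib

theorem stmt3 {Γ Λ : Type*}
    [Group Γ] [TopologicalSpace Γ] [IsTopologicalGroup Γ] [T2Space Γ]
    [Group Λ] [TopologicalSpace Λ] [IsTopologicalGroup Λ] [T2Space Λ]
    (A U : Subgroup Γ) (hA : Dense (A : Set Γ)) (hU : IsOpen (U : Set Γ))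
    (α : A →* Λ) (β : U →* Λ) (hβ : Continuous β)
    (hagree : ∀ x (hxA : x ∈ A) (hxU : x ∈ U), α ⟨x, hxA⟩ = β ⟨x, hxU⟩) :
    ∃! γ : Γ →* Λ, Continuous γ ∧ (∀ x (hx : x ∈ A), γ x = α ⟨x, hx⟩) ∧
      (∀ x (hx : x ∈ U), γ x = β ⟨x, hx⟩) := by
  classical
  -- every element of Γ factors as (element of A) * (element of U)
  have hfac : ∀ g : Γ, ∃ b, b ∈ A ∧ b⁻¹ * g ∈ U := by
    intro g
    have hopen : IsOpen ((g * ·) '' (U : Set Γ)) :=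
      (Homeomorph.mulLeft g).isOpenMap _ hU
    have hne : ((g * ·) '' (U : Set Γ)).Nonempty :=
      ⟨g, ⟨1, U.one_mem, mul_one g⟩⟩
    obtain ⟨b, hbA, u, huU, hbu⟩ := hA.exists_mem_open hopen hne
    refine ⟨b, hbA, ?_⟩
    have : b⁻¹ * g = u⁻¹ := by
      have : b = g * u := hbu.symm
      rw [this]; group
    rw [this]; exact U.inv_mem huU
  choose a haA hwU using hfac
  set f : Γ → Λ := fun g => α ⟨a g, haA g⟩ * β ⟨(a g)⁻¹ * g, hwU g⟩ with hf
  -- well-definedness of f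
  have hwd : ∀ (g b : Γ) (hb : b ∈ A) (w : Γ) (hw' : w ∈ U), g = b * w →
      f g = α ⟨b, hb⟩ * β ⟨w, hw'⟩ := by
    intro g b hb w hw' hg
    have h1 : b⁻¹ * a g ∈ A := A.mul_mem (A.inv_mem hb) (haA g)
    have h2 : b⁻¹ * a g ∈ U := by
      have he : b⁻¹ * a g = w * ((a g)⁻¹ * g)⁻¹ := by
        subst hg; group
      rw [he]; exact U.mul_mem hw' (U.inv_mem (hwU g))
    have hα : α ⟨a g, haA g⟩ = α ⟨b, hb⟩ * α ⟨b⁻¹ * a g, h1⟩ := by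
      rw [← map_mul]; congr 1; ext; simp
    have hβ2 : β ⟨b⁻¹ * a g, h2⟩ * β ⟨(a g)⁻¹ * g, hwU g⟩ = β ⟨w, hw'⟩ := by
      rw [← map_mul]; congr 1; ext
      show b⁻¹ * a g * ((a g)⁻¹ * g) = w
      subst hg; group
    calc f g = α ⟨a g, haA g⟩ * β ⟨(a g)⁻¹ * g, hwU g⟩ := rfl
      _ = (α ⟨b, hb⟩ * β ⟨b⁻¹ * a g, h2⟩) * β ⟨(a g)⁻¹ * g, hwU g⟩ := by
          rw [hα, hagree _ h1 h2]
      _ = α ⟨b, hb⟩ * (β ⟨b⁻¹ * a g, h2⟩ * β ⟨(a g)⁻¹ * g, hwU g⟩) := by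
          rw [mul_assoc]
      _ = _ := by rw [hβ2]
  -- f agrees with α on A and with β on U
  have hfA : ∀ x (hx : x ∈ A), f x = α ⟨x, hx⟩ := by
    intro x hx
    rw [hwd x x hx 1 U.one_mem (mul_one x).symm,
      show (⟨(1:Γ), U.one_mem⟩ : U) = 1 from rfl, map_one, mul_one]
  have hfU : ∀ x (hx : x ∈ U), f x = β ⟨x, hx⟩ := by
    intro x hx
    rw [hwd x 1 A.one_mem x hx (one_mul x).symm,
      show (⟨(1:Γ), A.one_mem⟩ : A) = 1 from rfl, map_one, one_mul]
  -- f is continuous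
  have hcont : Continuous f := by
    rw [continuous_iff_continuousAt]
    intro g
    set S : Set Γ := (fun x => (a g)⁻¹ * x) ⁻¹' (U : Set Γ) with hS
    have hSopen : IsOpen S := hU.preimage (by continuity)
    have hgS : g ∈ S := hwU g
    have hConS : ContinuousOn f S := by
      rw [continuousOn_iff_continuous_restrict]
      have : S.domRestrict f = fun x : S =>
          α ⟨a g, haA g⟩ * β ⟨(a g)⁻¹ * (x : Γ), x.2⟩ := by
        funext x
        exact hwd x.1 (a g) (haA g) ((a g)⁻¹ * x.1) x.2 (by group)
      rw [this]
      exact continuous_const.mul (hβ.comp (Continuous.subtype_mk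
        (continuous_const.mul continuous_subtype_val) _))
    exact hConS.continuousAt (hSopen.mem_nhds hgS)
  -- f is multiplicative
  have hmul : ∀ x y : Γ, f (x * y) = f x * f y := by
    have hd : Dense ((A : Set Γ) ×ˢ (A : Set Γ)) := hA.prod hA
    have hF : Continuous fun p : Γ × Γ => f (p.1 * p.2) :=
      hcont.comp continuous_mul
    have hG : Continuous fun p : Γ × Γ => f p.1 * f p.2 :=
      (hcont.comp continuous_fst).mul (hcont.comp continuous_snd)
    have heq : (fun p : Γ × Γ => f (p.1 * p.2)) =
        fun p : Γ × Γ => f p.1 * f p.2 := by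
      apply Continuous.ext_on hd hF hG
      rintro ⟨x, y⟩ ⟨hx, hy⟩
      simp only
      rw [hfA x hx, hfA y hy, hfA (x * y) (A.mul_mem hx hy), ← map_mul]
      rfl
    intro x y
    exact congrFun heq (x, y)
  refine ⟨MonoidHom.mk' f hmul, ⟨hcont, hfA, hfU⟩, ?_⟩
  rintro γ' ⟨hc', hA', _⟩
  ext x
  have : (γ' : Γ → Λ) = f := by
    apply Continuous.ext_on hA hc' hcont
    intro y hy
    rw [hA' y hy, hfA y hy]
  exact congrFun this x
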